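/- Let A, B be positive invertible operators with mI ≤ A, B ≤ MI (0 < m ≤ M) and α ∈ [0,1]. Then λ^{-1}(A ∇_α B) ≤ A ♯ B ≤ λ(A !_α B), where λ = (1-α)√(m/M) + α√(M/m) if α ≥ 1/2, and λ = (1-α)√(M/m) + α√(m/M) if α ≤ 1/2. -/

import Mathlib

open scoped ComplexOrder

/-- `A ^ r` for a Hermitian matrix, via the continuous functional calculus. -/
noncomputable def mpow {n : ℕ} (A : Matrix (Fin n) (Fin n) ℂ) (r : ℝ) : Matrix (Fin n) (Fin n) ℂ :=
  cfc (fun x : ℝ => x ^ r) A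

/-- The β-weighted operator geometric mean `A ♯_β B = A^{1/2}(A^{-1/2} B A^{-1/2})^β A^{1/2}`. -/
noncomputable def geomMean {n : ℕ} (A B : Matrix (Fin n) (Fin n) ℂ) (β : ℝ) :
    Matrix (Fin n) (Fin n) ℂ :=
  mpow A (1/2) * mpow (mpow A (-(1/2)) * B * mpow A (-(1/2))) β * mpow A (1/2)

/-- The α-weighted operator harmonic mean `A !_α B = ((1-α)A⁻¹ + αB⁻¹)⁻¹`. -/
noncomputable def harmMean {n : ℕ} (A B : Matrix (Fin n) (Fin n) ℂ) (α : ℝ) :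
    Matrix (Fin n) (Fin n) ℂ :=
  ((1 - α) • A⁻¹ + α • B⁻¹)⁻¹

namespace SandwichAux

open Matrix

variable {n : ℕ}

local notation "Mat" => Matrix (Fin n) (Fin n) ℂ

lemma contOn (f : ℝ → ℝ) (A : Mat) : ContinuousOn f (spectrum ℝ A) := by
  have : Finite (spectrum ℝ A) := A.finite_real_spectrum
  rw [continuousOn_iff_continuous_restrict]
  exact continuous_of_discreteTopology

lemma real_smul_eq (c : ℝ) (X : Mat) : c • X = (c : ℂ) • X := by
  ext i j
  simp [Complex.real_smul]

lemma psd_smul {X : Mat} (h : X.PosSemidef) {c : ℝ} (hc : 0 ≤ c) : (c • X).PosSemidef := by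
  rw [real_smul_eq]
  refine Matrix.PosSemidef.of_dotProduct_mulVec_nonneg ?_ (fun x => ?_)
  · unfold Matrix.IsHermitian
    rw [Matrix.conjTranspose_smul, Complex.star_def, Complex.conj_ofReal, h.1.eq]
  · rw [Matrix.smul_mulVec, dotProduct_smul, smul_eq_mul]
    exact mul_nonneg (by exact_mod_cast hc) (h.dotProduct_mulVec_nonneg x)

lemma spectrum_le {X : Mat} (hX : X.IsHermitian) {c : ℝ} (h : (X - c • (1 : Mat)).PosSemidef)
    {x : ℝ} (hx : x ∈ spectrum ℝ X) : c ≤ x := by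
  rw [hX.spectrum_real_eq_range_eigenvalues] at hx
  obtain ⟨i, rfl⟩ := hx
  set v : Fin n → ℂ := ⇑(hX.eigenvectorBasis i) with hv_def
  have hv : X *ᵥ v = (hX.eigenvalues i : ℂ) • v := by
    have := hX.mulVec_eigenvectorBasis i
    convert this using 2
    exact Complex.coe_smul _ _
  have hnorm : dotProduct (star v) v = 1 := by
    have h1 : (inner ℂ (hX.eigenvectorBasis i) (hX.eigenvectorBasis i) : ℂ) = 1 := by
      rw [inner_self_eq_norm_sq_to_K, hX.eigenvectorBasis.orthonormal.1 i]
      norm_num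
    rw [EuclideanSpace.inner_eq_star_dotProduct, dotProduct_comm] at h1
    exact h1
  have key := h.dotProduct_mulVec_nonneg v
  rw [Matrix.sub_mulVec, hv, real_smul_eq, Matrix.smul_mulVec, Matrix.one_mulVec,
    dotProduct_sub, dotProduct_smul, dotProduct_smul, hnorm] at key
  simp only [smul_eq_mul, mul_one] at key
  rw [sub_nonneg] at key
  exact_mod_cast key

lemma spectrum_ge {X : Mat} (hX : X.IsHermitian) {c : ℝ} (h : (c • (1 : Mat) - X).PosSemidef)
    {x : ℝ} (hx : x ∈ spectrum ℝ X) : x ≤ c := by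
  rw [hX.spectrum_real_eq_range_eigenvalues] at hx
  obtain ⟨i, rfl⟩ := hx
  set v : Fin n → ℂ := ⇑(hX.eigenvectorBasis i) with hv_def
  have hv : X *ᵥ v = (hX.eigenvalues i : ℂ) • v := by
    have := hX.mulVec_eigenvectorBasis i
    convert this using 2
    exact Complex.coe_smul _ _
  have hnorm : dotProduct (star v) v = 1 := by
    have h1 : (inner ℂ (hX.eigenvectorBasis i) (hX.eigenvectorBasis i) : ℂ) = 1 := by
      rw [inner_self_eq_norm_sq_to_K, hX.eigenvectorBasis.orthonormal.1 i]
      norm_num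
    rw [EuclideanSpace.inner_eq_star_dotProduct, dotProduct_comm] at h1
    exact h1
  have key := h.dotProduct_mulVec_nonneg v
  rw [Matrix.sub_mulVec, hv, real_smul_eq, Matrix.smul_mulVec, Matrix.one_mulVec,
    dotProduct_sub, dotProduct_smul, dotProduct_smul, hnorm] at key
  simp only [smul_eq_mul, mul_one] at key
  rw [sub_nonneg] at key
  exact_mod_cast key

lemma cfc_psd {C : Mat} (hC : C.IsHermitian) {f : ℝ → ℝ}
    (hf : ∀ x ∈ spectrum ℝ C, 0 ≤ f x) : (cfc f C).PosSemidef := by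
  rw [hC.cfc_eq]
  unfold Matrix.IsHermitian.cfc
  rw [Unitary.conjStarAlgAut_apply, star_eq_conjTranspose]
  refine (Matrix.PosSemidef.diagonal ?_).mul_mul_conjTranspose_same _
  intro i
  simp only [Function.comp_apply, Pi.zero_apply]
  rw [show (RCLike.ofReal (f (hC.eigenvalues i)) : ℂ) = ((f (hC.eigenvalues i) : ℝ) : ℂ) from rfl]
  exact_mod_cast hf _ (hC.eigenvalues_mem_spectrum_real i)

lemma scalar_core {s0 t α : ℝ} (hs0 : 0 < s0) (ht0 : 0 < t) (ht1 : s0 ≤ t) (ht2 : s0 * t ≤ 1)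
    (hα0 : 0 ≤ α) (hα1 : α ≤ 1) :
    (1 - α) + α * t ^ 2 ≤ (if (1:ℝ)/2 ≤ α then (1-α)*s0 + α*s0⁻¹ else (1-α)*s0⁻¹ + α*s0) * t ∧
    (1 - α) * t ^ 2 + α ≤ (if (1:ℝ)/2 ≤ α then (1-α)*s0 + α*s0⁻¹ else (1-α)*s0⁻¹ + α*s0) * t := by
  split_ifs with h
  · constructor
    · rw [← sub_nonneg]
      have key : ((1-α)*s0 + α*s0⁻¹) * t - ((1 - α) + α * t ^ 2)
          = (1 - t*s0) * (α*t - (1-α)*s0) / s0 := by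
        field_simp
        ring
      rw [key]
      apply div_nonneg _ hs0.le
      apply mul_nonneg (by nlinarith) (by nlinarith)
    · rw [← sub_nonneg]
      have key : ((1-α)*s0 + α*s0⁻¹) * t - ((1 - α) * t ^ 2 + α)
          = (t - s0) * (α - (1-α)*s0*t) / s0 := by
        field_simp
        ring
      rw [key]
      apply div_nonneg _ hs0.le
      apply mul_nonneg (by nlinarith) (by nlinarith)
  · push_neg at h
    constructor
    · rw [← sub_nonneg]
      have key : ((1-α)*s0⁻¹ + α*s0) * t - ((1 - α) + α * t ^ 2)
          = (t - s0) * ((1-α) - α*s0*t) / s0 := by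
        field_simp
        ring
      rw [key]
      apply div_nonneg _ hs0.le
      apply mul_nonneg (by nlinarith) (by nlinarith)
    · rw [← sub_nonneg]
      have key : ((1-α)*s0⁻¹ + α*s0) * t - ((1 - α) * t ^ 2 + α)
          = (1 - t*s0) * ((1-α)*t - α*s0) / s0 := by
        field_simp
        ring
      rw [key]
      apply div_nonneg _ hs0.le
      apply mul_nonneg (by nlinarith) (by nlinarith)

lemma L_pos {s0 α : ℝ} (hs0 : 0 < s0) (hα0 : 0 ≤ α) (hα1 : α ≤ 1) :
    0 < (if (1:ℝ)/2 ≤ α then (1-α)*s0 + α*s0⁻¹ else (1-α)*s0⁻¹ + α*s0) := by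
  have hsi : 0 < s0⁻¹ := inv_pos.2 hs0
  split_ifs with h
  · have : 0 < α := by linarith
    nlinarith
  · push_neg at h
    nlinarith

end SandwichAux

open SandwichAux Matrix

/-- For `mI ≤ A, B ≤ MI` and `α ∈ [0,1]`: `λ⁻¹(A ∇_α B) ≤ A ♯ B ≤ λ(A !_α B)` with
`λ = (1-α)√(m/M) + α√(M/m)` if `α ≥ 1/2`, and `λ = (1-α)√(M/m) + α√(m/M)` if `α ≤ 1/2`. -/
theorem geom_sandwich_half {n : ℕ} (A B : Matrix (Fin n) (Fin n) ℂ) (m M α : ℝ)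
    (hA : A.PosDef) (hB : B.PosDef) (hm : 0 < m) (hmM : m ≤ M)
    (hAm : (A - m • (1 : Matrix (Fin n) (Fin n) ℂ)).PosSemidef)
    (hAM : (M • (1 : Matrix (Fin n) (Fin n) ℂ) - A).PosSemidef)
    (hBm : (B - m • (1 : Matrix (Fin n) (Fin n) ℂ)).PosSemidef)
    (hBM : (M • (1 : Matrix (Fin n) (Fin n) ℂ) - B).PosSemidef)
    (hα0 : 0 ≤ α) (hα1 : α ≤ 1) :
    (geomMean A B (1/2) -
        (if (1:ℝ)/2 ≤ α then (1 - α) * Real.sqrt (m / M) + α * Real.sqrt (M / m)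
         else (1 - α) * Real.sqrt (M / m) + α * Real.sqrt (m / M))⁻¹
          • ((1 - α) • A + α • B)).PosSemidef ∧
    ((if (1:ℝ)/2 ≤ α then (1 - α) * Real.sqrt (m / M) + α * Real.sqrt (M / m)
      else (1 - α) * Real.sqrt (M / m) + α * Real.sqrt (m / M))
        • harmMean A B α - geomMean A B (1/2)).PosSemidef := by
  have hM : 0 < M := lt_of_lt_of_le hm hmM
  have hA' : IsSelfAdjoint A := hA.isHermitian
  have hApos : ∀ x ∈ spectrum ℝ A, 0 < x := by
    intro x hx
    rw [hA.isHermitian.spectrum_real_eq_range_eigenvalues] at hx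
    obtain ⟨i, rfl⟩ := hx
    exact hA.eigenvalues_pos i
  set L : ℝ := (if (1:ℝ)/2 ≤ α then (1 - α) * Real.sqrt (m / M) + α * Real.sqrt (M / m)
      else (1 - α) * Real.sqrt (M / m) + α * Real.sqrt (m / M)) with hLdef
  set s0 : ℝ := Real.sqrt (m / M) with hs0def
  have hs0pos : 0 < s0 := Real.sqrt_pos.2 (div_pos hm hM)
  have hMm : Real.sqrt (M / m) = s0⁻¹ := by rw [hs0def, ← Real.sqrt_inv, inv_div]
  have hLform : L = (if (1:ℝ)/2 ≤ α then (1-α)*s0 + α*s0⁻¹ else (1-α)*s0⁻¹ + α*s0) := by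
    rw [hLdef, hMm]
  have hLpos : 0 < L := hLform ▸ L_pos hs0pos hα0 hα1
  -- functions
  set f2 : ℝ → ℝ := fun x => x ^ ((1 : ℝ)/2) with hf2
  set fm : ℝ → ℝ := fun x => x ^ (-((1 : ℝ)/2)) with hfm
  have cfcm : ∀ (f g : ℝ → ℝ) (X : Matrix (Fin n) (Fin n) ℂ),
      cfc f X * cfc g X = cfc (fun x => f x * g x) X :=
    fun f g X => (cfc_mul f g X (contOn f X) (contOn g X)).symm
  -- algebra of s = A^{1/2}, si = A^{-1/2}
  have hss : cfc f2 A * cfc f2 A = A := by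
    rw [cfcm]
    rw [cfc_congr (g := fun x : ℝ => x) (fun x hx => ?_), cfc_id' ℝ A]
    have hx := hApos x hx
    rw [hf2]; simp only
    rw [← Real.rpow_add hx]; norm_num
  have hssi : cfc f2 A * cfc fm A = 1 := by
    rw [cfcm]
    rw [cfc_congr (g := fun _ : ℝ => 1) (fun x hx => ?_), cfc_const_one ℝ A]
    have hx := hApos x hx
    rw [hf2, hfm]; simp only
    rw [← Real.rpow_add hx]; norm_num
  have hsis : cfc fm A * cfc f2 A = 1 := by
    rw [cfcm]
    rw [cfc_congr (g := fun _ : ℝ => 1) (fun x hx => ?_), cfc_const_one ℝ A]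
    have hx := hApos x hx
    rw [hf2, hfm]; simp only
    rw [← Real.rpow_add hx]; norm_num
  have h1 : A * cfc fm A = cfc (fun x => x * fm x) A := by
    conv_lhs => lhs; rw [show A = cfc (fun x : ℝ => x) A from (cfc_id' ℝ A hA').symm]
    rw [cfcm]
  have h1' : cfc fm A * A = cfc (fun x => fm x * x) A := by
    conv_lhs => rhs; rw [show A = cfc (fun x : ℝ => x) A from (cfc_id' ℝ A hA').symm]
    rw [cfcm]
  have hsiAsi : cfc fm A * A * cfc fm A = 1 := by
    rw [mul_assoc, h1, cfcm]
    rw [cfc_congr (g := fun _ : ℝ => 1) (fun x hx => ?_), cfc_const_one ℝ A]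
    have hx := hApos x hx
    rw [hfm]; simp only
    nth_rewrite 2 [← Real.rpow_one x]
    rw [← Real.rpow_add hx, ← Real.rpow_add hx]; norm_num
  have h2 : cfc fm A * (cfc fm A * A) = 1 := by
    rw [h1', cfcm]
    rw [cfc_congr (g := fun _ : ℝ => 1) (fun x hx => ?_), cfc_const_one ℝ A]
    have hx := hApos x hx
    rw [hfm]; simp only
    nth_rewrite 3 [← Real.rpow_one x]
    rw [← Real.rpow_add hx, ← Real.rpow_add hx]; norm_num
  have h2' : (cfc fm A * cfc fm A) * A = 1 := by rw [mul_assoc]; exact h2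
  have hAinv : A⁻¹ = cfc fm A * cfc fm A := Matrix.inv_eq_left_inv h2'
  have hs_herm : (cfc f2 A).IsHermitian := (cfc_predicate f2 A : IsSelfAdjoint _)
  have hsi_herm : (cfc fm A).IsHermitian := (cfc_predicate fm A : IsSelfAdjoint _)
  -- the matrix C
  set C : Matrix (Fin n) (Fin n) ℂ := cfc fm A * B * cfc fm A with hCdef
  have hC : C.IsHermitian := by
    rw [hCdef]
    unfold Matrix.IsHermitian
    rw [conjTranspose_mul, conjTranspose_mul, hsi_herm.eq, hB.isHermitian.eq, mul_assoc]
  have hC' : IsSelfAdjoint C := hC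
  -- spectrum bounds of C
  have hpsd1 : (C - (m/M) • (1 : Matrix (Fin n) (Fin n) ℂ)).PosSemidef := by
    have e1 : C - (m/M) • (1 : Matrix (Fin n) (Fin n) ℂ)
        = cfc fm A * (B - m • 1) * cfc fm A
          + (m/M) • (cfc fm A * (M • 1 - A) * cfc fm A) := by
      rw [hCdef]
      simp only [Matrix.mul_sub, Matrix.sub_mul, Matrix.mul_smul, Matrix.smul_mul, mul_one,
        hsiAsi, smul_sub, smul_smul]
      rw [div_mul_cancel₀ m hM.ne']
      module
    rw [e1]
    have p1 := hBm.mul_mul_conjTranspose_same (cfc fm A)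
    rw [hsi_herm.eq] at p1
    have p2 := hAM.mul_mul_conjTranspose_same (cfc fm A)
    rw [hsi_herm.eq] at p2
    exact p1.add (psd_smul p2 (le_of_lt (div_pos hm hM)))
  have hpsd2 : ((M/m) • (1 : Matrix (Fin n) (Fin n) ℂ) - C).PosSemidef := by
    have e2 : (M/m) • (1 : Matrix (Fin n) (Fin n) ℂ) - C
        = cfc fm A * (M • 1 - B) * cfc fm A
          + (M/m) • (cfc fm A * (A - m • 1) * cfc fm A) := by
      rw [hCdef]
      simp only [Matrix.mul_sub, Matrix.sub_mul, Matrix.mul_smul, Matrix.smul_mul, mul_one,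
        hsiAsi, smul_sub, smul_smul]
      rw [div_mul_cancel₀ M hm.ne']
      module
    rw [e2]
    have p1 := hBM.mul_mul_conjTranspose_same (cfc fm A)
    rw [hsi_herm.eq] at p1
    have p2 := hAm.mul_mul_conjTranspose_same (cfc fm A)
    rw [hsi_herm.eq] at p2
    exact p1.add (psd_smul p2 (le_of_lt (div_pos hM hm)))
  have hCspec : ∀ x ∈ spectrum ℝ C, m/M ≤ x ∧ x ≤ M/m := fun x hx =>
    ⟨spectrum_le hC hpsd1 hx, spectrum_ge hC hpsd2 hx⟩
  have hCpos : ∀ x ∈ spectrum ℝ C, 0 < x := fun x hx =>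
    lt_of_lt_of_le (div_pos hm hM) (hCspec x hx).1
  -- B = s C s
  have hBC : cfc f2 A * C * cfc f2 A = B := by
    rw [hCdef]
    simp only [mul_assoc]
    rw [hsis, mul_one, ← mul_assoc, hssi, one_mul]
  -- geomMean
  have hgeom : geomMean A B (1/2) = cfc f2 A * cfc f2 C * cfc f2 A := rfl
  -- arithmetic mean identity
  have hg1 : cfc (fun x : ℝ => (1-α) + α*x) C
      = (1-α) • (1 : Matrix (Fin n) (Fin n) ℂ) + α • C := by
    have e := cfc_add C (fun _ : ℝ => (1-α)) (fun x : ℝ => α*x) (contOn _ C) (contOn _ C)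
    rw [cfc_const _ _ hC', cfc_const_mul_id _ _ hC', Algebra.algebraMap_eq_smul_one] at e
    exact e
  have hNabla : (1 - α) • A + α • B = cfc f2 A * cfc (fun x : ℝ => (1-α) + α*x) C * cfc f2 A := by
    rw [hg1]
    simp only [Matrix.mul_add, Matrix.add_mul, Matrix.mul_smul, Matrix.smul_mul, mul_one,
      hss, hBC]
  -- inverse-related identities
  have hCid : C = cfc (fun x : ℝ => x) C := (cfc_id' ℝ C hC').symm
  have hCinvC : cfc (fun x : ℝ => x⁻¹) C * C = 1 := by
    have e : cfc (fun x : ℝ => x⁻¹) C * C = cfc (fun x : ℝ => x⁻¹ * x) C := by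
      conv_lhs => rhs; rw [hCid]
      rw [cfcm]
    rw [e]
    rw [cfc_congr (g := fun _ : ℝ => 1) (fun x hx => ?_), cfc_const_one ℝ C]
    exact inv_mul_cancel₀ (ne_of_gt (hCpos x hx))
  have hBinv : B⁻¹ = cfc fm A * cfc (fun x : ℝ => x⁻¹) C * cfc fm A := by
    refine Matrix.inv_eq_left_inv ?_
    rw [← hBC]
    simp only [mul_assoc]
    have t1 : cfc fm A * (cfc f2 A * (C * cfc f2 A)) = C * cfc f2 A := by
      rw [← mul_assoc, hsis, one_mul]
    rw [t1, ← mul_assoc (cfc (fun x : ℝ => x⁻¹) C) C, hCinvC, one_mul, hsis]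
  -- harmonic mean
  have hgfun : cfc (fun x : ℝ => (1-α) + α * x⁻¹) C
      = (1-α) • (1 : Matrix (Fin n) (Fin n) ℂ) + α • cfc (fun x : ℝ => x⁻¹) C := by
    have e := cfc_add C (fun _ : ℝ => (1-α)) (fun x : ℝ => α * x⁻¹) (contOn _ C) (contOn _ C)
    rw [cfc_const _ _ hC', Algebra.algebraMap_eq_smul_one] at e
    have e2 := cfc_const_mul α (fun x : ℝ => x⁻¹) C (contOn _ C)
    rw [e2] at e
    exact e
  have hD : (1 - α) • A⁻¹ + α • B⁻¹
      = cfc fm A * cfc (fun x : ℝ => (1-α) + α * x⁻¹) C * cfc fm A := by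
    rw [hgfun, hAinv, hBinv]
    simp only [Matrix.mul_add, Matrix.add_mul, Matrix.mul_smul, Matrix.smul_mul, mul_one]
  have hgpos : ∀ x ∈ spectrum ℝ C, 0 < (1-α) + α * x⁻¹ := by
    intro x hx
    have hxpos := hCpos x hx
    rcases lt_or_ge α 1 with h | h
    · have h0 : 0 ≤ α * x⁻¹ := mul_nonneg hα0 (inv_nonneg.2 hxpos.le)
      linarith
    · have : α = 1 := le_antisymm hα1 h
      subst this
      simp only [sub_self, one_mul, zero_add]
      exact inv_pos.2 hxpos
  have hHarm : harmMean A B α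
      = cfc f2 A * cfc (fun x : ℝ => ((1-α) + α * x⁻¹)⁻¹) C * cfc f2 A := by
    show ((1 - α) • A⁻¹ + α • B⁻¹)⁻¹ = _
    refine Matrix.inv_eq_right_inv ?_
    rw [hD]
    simp only [mul_assoc]
    have t1 : cfc fm A * (cfc f2 A * (cfc (fun x : ℝ => ((1-α) + α * x⁻¹)⁻¹) C * cfc f2 A))
        = cfc (fun x : ℝ => ((1-α) + α * x⁻¹)⁻¹) C * cfc f2 A := by
      rw [← mul_assoc, hsis, one_mul]
    rw [t1, ← mul_assoc (cfc (fun x : ℝ => (1-α) + α * x⁻¹) C), cfcm]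
    rw [cfc_congr (a := C) (g := fun _ : ℝ => 1) (fun x hx => ?_), cfc_const_one ℝ C, one_mul,
      hsis]
    exact mul_inv_cancel₀ (ne_of_gt (hgpos x hx))
  -- scalar inequalities on the spectrum of C
  have hscal : ∀ x ∈ spectrum ℝ C,
      (0 ≤ f2 x - L⁻¹ * ((1-α) + α*x)) ∧ (0 ≤ L * ((1-α) + α * x⁻¹)⁻¹ - f2 x) := by
    intro x hx
    obtain ⟨hxl, hxu⟩ := hCspec x hx
    have hxpos : 0 < x := lt_of_lt_of_le (div_pos hm hM) hxl
    have ht0 : 0 < Real.sqrt x := Real.sqrt_pos.2 hxpos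
    have ht1 : s0 ≤ Real.sqrt x := by rw [hs0def]; exact Real.sqrt_le_sqrt hxl
    have htu : Real.sqrt x ≤ s0⁻¹ := by rw [← hMm]; exact Real.sqrt_le_sqrt hxu
    have ht2 : s0 * Real.sqrt x ≤ 1 := by
      calc s0 * Real.sqrt x ≤ s0 * s0⁻¹ := mul_le_mul_of_nonneg_left htu hs0pos.le
        _ = 1 := mul_inv_cancel₀ (ne_of_gt hs0pos)
    have htsq : Real.sqrt x ^ 2 = x := Real.sq_sqrt hxpos.le
    obtain ⟨c1, c2⟩ := scalar_core hs0pos ht0 ht1 ht2 hα0 hα1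
    rw [htsq] at c1 c2
    rw [← hLform] at c1 c2
    have hf2x : f2 x = Real.sqrt x := by rw [hf2]; exact (Real.sqrt_eq_rpow x).symm
    have hssx : Real.sqrt x * Real.sqrt x = x := Real.mul_self_sqrt hxpos.le
    constructor
    · rw [sub_nonneg, hf2x]
      rw [inv_mul_le_iff₀ hLpos]
      exact c1
    · rw [sub_nonneg, hf2x, ← div_eq_mul_inv, le_div_iff₀ (hgpos x hx)]
      have e : Real.sqrt x * ((1-α) + α * x⁻¹) * Real.sqrt x
          = (1-α) * (Real.sqrt x * Real.sqrt x) + α * (x⁻¹ * (Real.sqrt x * Real.sqrt x)) := by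
        ring
      have e2 : Real.sqrt x * ((1-α) + α * x⁻¹) * Real.sqrt x = (1-α) * x + α := by
        rw [e, hssx, inv_mul_cancel₀ (ne_of_gt hxpos), mul_one]
      have c2' : Real.sqrt x * ((1-α) + α * x⁻¹) * Real.sqrt x ≤ L * Real.sqrt x := by
        rw [e2]; exact c2
      exact le_of_mul_le_mul_right c2' ht0
  -- assemble goal 1
  constructor
  · have key1 : geomMean A B (1/2) - L⁻¹ • ((1 - α) • A + α • B)
        = cfc f2 A * cfc (fun x : ℝ => f2 x - L⁻¹ * ((1-α) + α*x)) C * cfc f2 A := by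
      have e : cfc (fun x : ℝ => f2 x - L⁻¹ * ((1-α) + α*x)) C
          = cfc f2 C - L⁻¹ • cfc (fun x : ℝ => (1-α) + α*x) C := by
        have e1 := cfc_sub f2 (fun x : ℝ => L⁻¹ * ((1-α) + α*x)) C (contOn _ C) (contOn _ C)
        have e2 := cfc_const_mul L⁻¹ (fun x : ℝ => (1-α) + α*x) C (contOn _ C)
        rw [e2] at e1
        exact e1
      rw [hgeom, hNabla, e]
      simp only [Matrix.mul_sub, Matrix.sub_mul, Matrix.mul_smul, Matrix.smul_mul]
    rw [key1]
    have hq := cfc_psd hC (f := fun x : ℝ => f2 x - L⁻¹ * ((1-α) + α*x))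
      (fun x hx => (hscal x hx).1)
    have := hq.mul_mul_conjTranspose_same (cfc f2 A)
    rwa [hs_herm.eq] at this
  · have key2 : L • harmMean A B α - geomMean A B (1/2)
        = cfc f2 A * cfc (fun x : ℝ => L * ((1-α) + α * x⁻¹)⁻¹ - f2 x) C * cfc f2 A := by
      have e : cfc (fun x : ℝ => L * ((1-α) + α * x⁻¹)⁻¹ - f2 x) C
          = L • cfc (fun x : ℝ => ((1-α) + α * x⁻¹)⁻¹) C - cfc f2 C := by
        have e1 := cfc_sub (fun x : ℝ => L * ((1-α) + α * x⁻¹)⁻¹) f2 C (contOn _ C) (contOn _ C)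
        have e2 := cfc_const_mul L (fun x : ℝ => ((1-α) + α * x⁻¹)⁻¹) C (contOn _ C)
        rw [e2] at e1
        exact e1
      rw [hgeom, hHarm, e]
      simp only [Matrix.mul_sub, Matrix.sub_mul, Matrix.mul_smul, Matrix.smul_mul]
    rw [key2]
    have hq := cfc_psd hC (f := fun x : ℝ => L * ((1-α) + α * x⁻¹)⁻¹ - f2 x)
      (fun x hx => (hscal x hx).2)
    have := hq.mul_mul_conjTranspose_same (cfc f2 A)
    rwa [hs_herm.eq] at this
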